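/- Let Q ≻ 0 symmetric n×n, Y ∈ ℝ^{m×n}, and set P = Q⁻¹, K = YQ⁻¹. Suppose R := Q - (C₁Q+D₁Y)ᵀ(C₁Q+D₁Y) ≻ 0 and Q - γ⁻²I - (A₀Q+B₀Y)R⁻¹(A₀Q+B₀Y)ᵀ ≻ 0 for some γ > 0. Then γ²I - P ≻ 0 and P - (A₀+B₀K)ᵀP(A₀+B₀K) - (C₁+D₁K)ᵀ(C₁+D₁K) - (A₀+B₀K)ᵀP(γ²I-P)⁻¹P(A₀+B₀K) ≻ 0. -/

import Mathlib

open Matrix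

section Helpers

variable {l o : Type*} [Fintype l] [DecidableEq l] [Fintype o] [DecidableEq o]

private lemma real_conjTranspose_eq (A : Matrix l o ℝ) : Aᴴ = Aᵀ := by
  ext i j; simp [conjTranspose_apply]

private lemma schurPosDef₁₁ {A : Matrix l l ℝ} (B : Matrix l o ℝ) (D : Matrix o o ℝ)
    (hA : A.PosDef) [Invertible A] :
    (fromBlocks A B Bᴴ D).PosDef ↔ (D - Bᴴ * A⁻¹ * B).PosDef := by
  rw [posDef_iff_dotProduct_mulVec, posDef_iff_dotProduct_mulVec, Matrix.IsHermitian.fromBlocks₁₁ _ _ hA.1]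
  constructor
  · rintro ⟨h1, h2⟩
    refine ⟨h1, fun x hx => ?_⟩
    have hz : (-((A⁻¹ * B) *ᵥ x) ⊕ᵥ x) ≠ 0 := fun h0 =>
      hx (funext fun i => congrFun h0 (Sum.inr i))
    have := h2 hz
    rw [dotProduct_mulVec, schur_complement_eq₁₁ B D _ _ hA.1, neg_add_cancel,
      dotProduct_zero, zero_add] at this
    rw [dotProduct_mulVec]; exact this
  · rintro ⟨h1, h2⟩
    refine ⟨h1, fun z hz => ?_⟩
    rw [← Sum.elim_comp_inl_inr z, dotProduct_mulVec, schur_complement_eq₁₁ B D _ _ hA.1]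
    by_cases hy : z ∘ Sum.inr = 0
    · have hx : z ∘ Sum.inl ≠ 0 := by
        intro h0
        apply hz
        funext i
        cases i with
        | inl a => exact congrFun h0 a
        | inr b => exact congrFun hy b
      rw [hy]
      simp only [mulVec_zero, add_zero, star_zero, zero_vecMul, zero_dotProduct]
      have := hA.dotProduct_mulVec_pos hx
      rwa [dotProduct_mulVec] at this
    · have hpos := h2 hy
      rw [dotProduct_mulVec] at hpos
      have hnn : (0:ℝ) ≤ star (z ∘ Sum.inl + (A⁻¹ * B) *ᵥ (z ∘ Sum.inr)) ᵥ* A ⬝ᵥ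
          (z ∘ Sum.inl + (A⁻¹ * B) *ᵥ (z ∘ Sum.inr)) := by
        rw [← dotProduct_mulVec]; exact hA.posSemidef.dotProduct_mulVec_nonneg _
      exact add_pos_of_nonneg_of_pos hnn hpos

private lemma schurPosDef₂₂ (A : Matrix l l ℝ) (B : Matrix l o ℝ) {D : Matrix o o ℝ}
    (hD : D.PosDef) [Invertible D] :
    (fromBlocks A B Bᴴ D).PosDef ↔ (A - B * D⁻¹ * Bᴴ).PosDef := by
  rw [posDef_iff_dotProduct_mulVec, posDef_iff_dotProduct_mulVec, Matrix.IsHermitian.fromBlocks₂₂ _ _ hD.1]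
  constructor
  · rintro ⟨h1, h2⟩
    refine ⟨h1, fun x hx => ?_⟩
    have hz : (x ⊕ᵥ -((D⁻¹ * Bᴴ) *ᵥ x)) ≠ 0 := fun h0 =>
      hx (funext fun i => congrFun h0 (Sum.inl i))
    have := h2 hz
    rw [dotProduct_mulVec, schur_complement_eq₂₂ A B _ _ hD.1, add_neg_cancel,
      dotProduct_zero, zero_add] at this
    rw [dotProduct_mulVec]; exact this
  · rintro ⟨h1, h2⟩
    refine ⟨h1, fun z hz => ?_⟩
    rw [← Sum.elim_comp_inl_inr z, dotProduct_mulVec, schur_complement_eq₂₂ A B _ _ hD.1]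
    by_cases hy : z ∘ Sum.inl = 0
    · have hx : z ∘ Sum.inr ≠ 0 := by
        intro h0
        apply hz
        funext i
        cases i with
        | inl a => exact congrFun hy a
        | inr b => exact congrFun h0 b
      rw [hy]
      simp only [mulVec_zero, zero_add, add_zero, star_zero, zero_vecMul, zero_dotProduct]
      have := hD.dotProduct_mulVec_pos hx
      rw [dotProduct_mulVec] at this
      linarith
    · have hpos := h2 hy
      rw [dotProduct_mulVec] at hpos
      have hnn : (0:ℝ) ≤ star ((D⁻¹ * Bᴴ) *ᵥ (z ∘ Sum.inl) + z ∘ Sum.inr) ᵥ* D ⬝ᵥ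
          ((D⁻¹ * Bᴴ) *ᵥ (z ∘ Sum.inl) + z ∘ Sum.inr) := by
        rw [← dotProduct_mulVec]; exact hD.posSemidef.dotProduct_mulVec_nonneg _
      exact add_pos_of_nonneg_of_pos hnn hpos

private lemma posDef_conj {N P : Matrix l l ℝ} (hN : N.PosDef) (hP : P.PosDef) :
    (P * N * P).PosDef := by
  have hsd := hN.posSemidef.conjTranspose_mul_mul_same P
  rw [hP.1] at hsd
  refine posDef_iff_dotProduct_mulVec.mpr ⟨hsd.1, fun x hx => ?_⟩
  have hy : P *ᵥ x ≠ 0 := by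
    intro h
    exact hx (Matrix.mulVec_injective_iff_isUnit.mpr hP.isUnit
      (h.trans (Matrix.mulVec_zero P).symm))
  have key : star x ⬝ᵥ ((P * N * P) *ᵥ x) = star (P *ᵥ x) ⬝ᵥ (N *ᵥ (P *ᵥ x)) := by
    rw [← Matrix.mulVec_mulVec, ← Matrix.mulVec_mulVec, dotProduct_mulVec]
    congr 1
    conv_lhs => rw [← hP.1]
    rw [← star_mulVec]
  rw [key]
  exact hN.dotProduct_mulVec_pos hy

private lemma posDef_smul_one {c : ℝ} (hc : 0 < c) : (c • (1 : Matrix l l ℝ)).PosDef := by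
  have h : c • (1 : Matrix l l ℝ) = Matrix.diagonal (fun _ => c) := by
    ext i j
    by_cases h : i = j <;> simp [Matrix.one_apply, Matrix.diagonal_apply, h]
  rw [h]
  exact Matrix.PosDef.diagonal fun _ => hc

end Helpers

theorem stmt16 {n m p₁ : ℕ}
    (Q : Matrix (Fin n) (Fin n) ℝ) (hQ : Q.PosDef)
    (Y : Matrix (Fin m) (Fin n) ℝ)
    (A₀ : Matrix (Fin n) (Fin n) ℝ) (B₀ : Matrix (Fin n) (Fin m) ℝ)
    (C₁ : Matrix (Fin p₁) (Fin n) ℝ) (D₁ : Matrix (Fin p₁) (Fin m) ℝ)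
    (γ : ℝ) (hγ : 0 < γ)
    (hR : (Q - (C₁ * Q + D₁ * Y)ᵀ * (C₁ * Q + D₁ * Y)).PosDef)
    (h15b : (Q - γ⁻¹ ^ 2 • (1 : Matrix (Fin n) (Fin n) ℝ) -
        (A₀ * Q + B₀ * Y) * (Q - (C₁ * Q + D₁ * Y)ᵀ * (C₁ * Q + D₁ * Y))⁻¹ *
          (A₀ * Q + B₀ * Y)ᵀ).PosDef) :
    (γ ^ 2 • (1 : Matrix (Fin n) (Fin n) ℝ) - Q⁻¹).PosDef ∧
      (Q⁻¹ - (A₀ + B₀ * (Y * Q⁻¹))ᵀ * Q⁻¹ * (A₀ + B₀ * (Y * Q⁻¹)) -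
        (C₁ + D₁ * (Y * Q⁻¹))ᵀ * (C₁ + D₁ * (Y * Q⁻¹)) -
        (A₀ + B₀ * (Y * Q⁻¹))ᵀ * Q⁻¹ *
          (γ ^ 2 • (1 : Matrix (Fin n) (Fin n) ℝ) - Q⁻¹)⁻¹ * Q⁻¹ *
          (A₀ + B₀ * (Y * Q⁻¹))).PosDef := by
  set F := A₀ * Q + B₀ * Y with hFdef
  set G := C₁ * Q + D₁ * Y with hGdef
  set R := Q - Gᵀ * G with hRdef
  set T := Q - γ⁻¹ ^ 2 • (1 : Matrix (Fin n) (Fin n) ℝ) with hTdef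
  set W := γ ^ 2 • (1 : Matrix (Fin n) (Fin n) ℝ) - Q⁻¹ with hWdef
  have hQdet : IsUnit Q.det := (Matrix.isUnit_iff_isUnit_det Q).mp hQ.isUnit
  have hQQi : Q * Q⁻¹ = 1 := Matrix.mul_nonsing_inv Q hQdet
  have hQiQ : Q⁻¹ * Q = 1 := Matrix.nonsing_inv_mul Q hQdet
  have hQt : Qᵀ = Q := by rw [← real_conjTranspose_eq]; exact hQ.1
  have hQit : Q⁻¹ᵀ = Q⁻¹ := by rw [Matrix.transpose_nonsing_inv, hQt]
  have hQi : Q⁻¹.PosDef := hQ.inv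
  -- T is positive definite
  have hRidet : IsUnit R⁻¹.det :=
    (Matrix.isUnit_iff_isUnit_det _).mp hR.inv.isUnit
  have hFRF : (F * R⁻¹ * Fᵀ).PosSemidef := by
    have := hR.inv.posSemidef.mul_mul_conjTranspose_same F
    rwa [real_conjTranspose_eq] at this
  have hT : T.PosDef := by
    have h := h15b.add_posSemidef hFRF
    rwa [sub_add_cancel] at h
  -- part 1 via Schur complements on fromBlocks Q 1 1 (γ²•1)
  haveI : Invertible Q := hQ.isUnit.invertible
  have hγ2 : (0:ℝ) < γ ^ 2 := by positivity
  have hg2 : ((γ ^ 2) • (1 : Matrix (Fin n) (Fin n) ℝ)).PosDef := posDef_smul_one hγ2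
  haveI : Invertible ((γ ^ 2) • (1 : Matrix (Fin n) (Fin n) ℝ)) := hg2.isUnit.invertible
  have hinvsmul : ((γ ^ 2) • (1 : Matrix (Fin n) (Fin n) ℝ))⁻¹ = γ⁻¹ ^ 2 • 1 := by
    apply Matrix.inv_eq_right_inv
    rw [Matrix.smul_mul, Matrix.mul_smul, Matrix.one_mul, smul_smul, ← mul_pow,
      mul_inv_cancel₀ hγ.ne', one_pow, one_smul]
  have h1H : (1 : Matrix (Fin n) (Fin n) ℝ)ᴴ = 1 := by simp
  have hblk : (fromBlocks Q (1 : Matrix (Fin n) (Fin n) ℝ)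
      (1 : Matrix (Fin n) (Fin n) ℝ)ᴴ ((γ ^ 2) • 1)).PosDef := by
    rw [schurPosDef₂₂ _ _ hg2]
    rw [hinvsmul, h1H, Matrix.mul_one, Matrix.one_mul]
    exact hT
  have hW : W.PosDef := by
    have h := (schurPosDef₁₁ (1 : Matrix (Fin n) (Fin n) ℝ) ((γ ^ 2) • 1) hQ).mp hblk
    rw [h1H, Matrix.one_mul, Matrix.mul_one] at h
    exact h
  -- inverse identity : T⁻¹ = Q⁻¹ + Q⁻¹ W⁻¹ Q⁻¹
  have hWdet : IsUnit W.det := (Matrix.isUnit_iff_isUnit_det W).mp hW.isUnit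
  have hWWi : W * W⁻¹ = 1 := Matrix.mul_nonsing_inv _ hWdet
  have hTQi : T * Q⁻¹ = γ⁻¹ ^ 2 • W := by
    rw [hTdef, hWdef, Matrix.sub_mul, hQQi, Matrix.smul_mul, Matrix.one_mul, smul_sub,
      smul_smul, ← mul_pow, inv_mul_cancel₀ hγ.ne', one_pow, one_smul]
  have hTinv : T⁻¹ = Q⁻¹ + Q⁻¹ * W⁻¹ * Q⁻¹ := by
    apply Matrix.inv_eq_right_inv
    have expand : T * (Q⁻¹ + Q⁻¹ * W⁻¹ * Q⁻¹) = T * Q⁻¹ + T * Q⁻¹ * W⁻¹ * Q⁻¹ := by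
      simp only [Matrix.mul_add, Matrix.mul_assoc]
    rw [expand, hTQi, Matrix.smul_mul, hWWi, Matrix.smul_mul, Matrix.one_mul, ← smul_add, hWdef,
      sub_add_cancel, smul_smul, ← mul_pow, inv_mul_cancel₀ hγ.ne', one_pow, one_smul]
  -- Schur swap to get R - Fᵀ T⁻¹ F ≻ 0
  haveI : Invertible R := hR.isUnit.invertible
  haveI : Invertible T := hT.isUnit.invertible
  have hblk2 : (fromBlocks T F Fᴴ R).PosDef := by
    rw [schurPosDef₂₂ _ _ hR, real_conjTranspose_eq]
    exact h15b
  have hN : (R - Fᵀ * T⁻¹ * F).PosDef := by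
    have h := (schurPosDef₁₁ F R hT).mp hblk2
    rwa [real_conjTranspose_eq] at h
  -- assemble
  have hAc : A₀ + B₀ * (Y * Q⁻¹) = F * Q⁻¹ := by
    rw [hFdef, Matrix.add_mul, Matrix.mul_assoc, Matrix.mul_assoc, hQQi, Matrix.mul_one]
  have hCc : C₁ + D₁ * (Y * Q⁻¹) = G * Q⁻¹ := by
    rw [hGdef, Matrix.add_mul, Matrix.mul_assoc, Matrix.mul_assoc, hQQi, Matrix.mul_one]
  refine ⟨hW, ?_⟩
  rw [hAc, hCc]
  have hfinal : Q⁻¹ - (F * Q⁻¹)ᵀ * Q⁻¹ * (F * Q⁻¹) - (G * Q⁻¹)ᵀ * (G * Q⁻¹) -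
      (F * Q⁻¹)ᵀ * Q⁻¹ * W⁻¹ * Q⁻¹ * (F * Q⁻¹) = Q⁻¹ * (R - Fᵀ * T⁻¹ * F) * Q⁻¹ := by
    rw [hTinv, hRdef]
    simp only [Matrix.transpose_mul, hQit, Matrix.mul_sub, Matrix.sub_mul, Matrix.mul_add,
      Matrix.add_mul, Matrix.mul_assoc, hQQi, Matrix.mul_one]
    abel
  rw [hfinal]
  exact posDef_conj hN hQi
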